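/- If f is MT-convex on I, a, b ∈ I with a < b, and f is integrable on [a,b], then f((a+b)/2) ≤ (1/(b-a)) ∫_a^b f(x) dx. -/

import Mathlib

open MeasureTheory intervalIntegral

theorem mt_convex_hadamard_left (I : Set ℝ) (hI : Convex ℝ I) (f : ℝ → ℝ)
    (hf0 : ∀ x ∈ I, 0 ≤ f x)
    (hf : ∀ x ∈ I, ∀ y ∈ I, ∀ t ∈ Set.Ioo (0:ℝ) 1,
      f (t * x + (1 - t) * y) ≤
        Real.sqrt t / (2 * Real.sqrt (1 - t)) * f x +
        Real.sqrt (1 - t) / (2 * Real.sqrt t) * f y)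
    (a b : ℝ) (ha : a ∈ I) (hb : b ∈ I) (hab : a < b)
    (hint : IntervalIntegrable f MeasureTheory.volume a b) :
    f ((a + b) / 2) ≤ (1 / (b - a)) * ∫ x in a..b, f x := by
  -- midpoint convexity
  have hmid : ∀ x ∈ I, ∀ y ∈ I, f ((x + y) / 2) ≤ (f x + f y) / 2 := by
    intro x hx y hy
    have h := hf x hx y hy (1/2) ⟨by norm_num, by norm_num⟩
    have hs : Real.sqrt (1 - 1/2 : ℝ) = Real.sqrt (1/2) := by norm_num
    have hs0 : Real.sqrt (1/2 : ℝ) ≠ 0 := by positivity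
    have hc : Real.sqrt (1/2:ℝ) / (2 * Real.sqrt (1/2)) = 1/2 := by
      field_simp
    rw [hs, hc] at h
    calc f ((x + y)/2) = f ((1/2) * x + (1 - 1/2) * y) := by ring_nf
      _ ≤ 1/2 * f x + 1/2 * f y := h
      _ = (f x + f y)/2 := by ring
  -- integrability of compositions
  have hab' : (a - b : ℝ) ≠ 0 := by linarith
  have hba' : (b - a : ℝ) ≠ 0 := by linarith
  have hg : IntervalIntegrable (fun t => f ((a - b) * t + b)) volume 0 1 := by
    have h1 := (hint.comp_add_right b).comp_mul_left (c := a - b)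
    have : (a - b) / (a - b) = (1:ℝ) := div_self hab'
    rw [sub_self, zero_div, this] at h1
    exact h1.symm
  have hh : IntervalIntegrable (fun t => f ((b - a) * t + a)) volume 0 1 := by
    have h1 := (hint.comp_add_right a).comp_mul_left (c := b - a)
    rw [sub_self, zero_div, div_self hba'] at h1
    exact h1
  -- integral values
  have hgval : (∫ t in (0:ℝ)..1, f ((a - b) * t + b)) = (1 / (b - a)) * ∫ x in a..b, f x := by
    rw [intervalIntegral.integral_comp_mul_add f hab' b]
    simp only [mul_zero, zero_add, mul_one]
    rw [intervalIntegral.integral_symm]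
    have : a - b + b = a := by ring
    rw [this]
    simp only [smul_eq_mul]
    field_simp
    ring
  have hhval : (∫ t in (0:ℝ)..1, f ((b - a) * t + a)) = (1 / (b - a)) * ∫ x in a..b, f x := by
    rw [intervalIntegral.integral_comp_mul_add f hba' a]
    have : b - a + a = b := by ring
    simp only [mul_zero, zero_add, mul_one, this, smul_eq_mul]
    field_simp
  -- pointwise inequality on [0,1]
  have hpt : ∀ t ∈ Set.Icc (0:ℝ) 1,
      f ((a + b) / 2) ≤ (f ((a - b) * t + b) + f ((b - a) * t + a)) / 2 := by
    intro t ht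
    obtain ⟨ht0, ht1⟩ := ht
    have hx : (a - b) * t + b ∈ I := by
      have := hI ha hb ht0 (by linarith : (0:ℝ) ≤ 1 - t) (by ring)
      have h2 : t * a + (1 - t) * b ∈ I := by simpa [smul_eq_mul] using this
      have : (a - b) * t + b = t * a + (1 - t) * b := by ring
      rwa [this]
    have hy : (b - a) * t + a ∈ I := by
      have := hI hb ha ht0 (by linarith : (0:ℝ) ≤ 1 - t) (by ring)
      have h2 : t * b + (1 - t) * a ∈ I := by simpa [smul_eq_mul] using this
      have : (b - a) * t + a = t * b + (1 - t) * a := by ring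
      rwa [this]
    have := hmid _ hx _ hy
    have heq : (((a - b) * t + b) + ((b - a) * t + a)) / 2 = (a + b) / 2 := by ring
    rwa [heq] at this
  -- conclude
  have hconst : (∫ _ in (0:ℝ)..1, f ((a + b) / 2)) = f ((a + b) / 2) := by simp
  have hmono : (∫ t in (0:ℝ)..1, f ((a + b) / 2)) ≤
      ∫ t in (0:ℝ)..1, (f ((a - b) * t + b) + f ((b - a) * t + a)) / 2 := by
    apply intervalIntegral.integral_mono_on (by norm_num) intervalIntegrable_const
    · exact ((hg.add hh).div_const 2)
    · exact hpt
  rw [hconst] at hmono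
  calc f ((a + b) / 2) ≤ ∫ t in (0:ℝ)..1, (f ((a - b) * t + b) + f ((b - a) * t + a)) / 2 := hmono
    _ = ((∫ t in (0:ℝ)..1, f ((a - b) * t + b)) + ∫ t in (0:ℝ)..1, f ((b - a) * t + a)) / 2 := by
        rw [intervalIntegral.integral_div, intervalIntegral.integral_add hg hh]
    _ = (1 / (b - a)) * ∫ x in a..b, f x := by rw [hgval, hhval]; ring
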